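/- For each n ≥ 2, the polynomials P₀, …, P_{n+1} ∈ ℤ[X] of Theorem 2.3 — i.e. polynomials with deg P_k ≤ k such that μ·Y = Σ_{k=0}^{n+1} (−μ)^{n+1−k} P_k(X) holds for all a, b, c, d ∈ ℂ with ad − bc = 1 and a + b = c + d ≠ 0, where μ = 1/(c+d)², X = bc, Y = a^{n+1} b^{n−1} + c^{n−1} d^{n+1} — can be chosen so that moreover: P₀(X) = 1; P₁(X) = 2nX + (n−1); P_{n−1}(X) = n² X^{n−1} + Σ_{j=0}^{n−2} C(n+1, j) X^j; P_n(X) = 2X^n + (1−n) X^{n−1}; P_{n+1}(X) = X^{n−1}; the constant term satisfies P_k(0) = C(n−1, k) for every 0 ≤ k ≤ n+1; and for every 1 ≤ k ≤ n the coefficient of X^k in P_k equals C(2n−k, k) + C(2n−k−1, k−1). In particular each P_k with 0 ≤ k ≤ n has degree exactly k, while P_{n+1} has degree n−1. (Lemma 2.4.) -/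

import Mathlib

open Polynomial Finset
noncomputable def PR : ℕ → (ℕ → Polynomial ℤ) × (ℕ → Polynomial ℤ)
  | 0 => (fun k => match k with | 0 => 1 | 1 => C 2 * X | 2 => 1 | _ => 0,
          fun k => match k with | 0 => 1 | 1 => C 3 * X + 1 | 2 => -X | _ => 0)
  | (m+1) =>
      (fun k => match k with
        | 0 => (PR m).2 0
        | (k+1) => X * (PR m).1 k + (PR m).2 (k+1),
       fun k => match k with
        | 0 => (PR m).2 0
        | (k+1) => (X + 1) * (PR m).2 k + (PR m).2 (k+1) + X * (PR m).1 k)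

lemma PR1_zero (m : ℕ) : (PR (m+1)).1 0 = (PR m).2 0 := rfl
lemma PR1_succ (m k : ℕ) : (PR (m+1)).1 (k+1) = X * (PR m).1 k + (PR m).2 (k+1) := rfl
lemma PR2_zero (m : ℕ) : (PR (m+1)).2 0 = (PR m).2 0 := rfl
lemma PR2_succ (m k : ℕ) : (PR (m+1)).2 (k+1) = (X+1) * (PR m).2 k + (PR m).2 (k+1) + X * (PR m).1 k := rfl

lemma PR_zero_of_big (m : ℕ) : (∀ j, j ≥ m+3 → (PR m).1 j = 0) ∧ (∀ j, j ≥ m+3 → (PR m).2 j = 0) := by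
  induction m with
  | zero =>
    constructor <;> intro j hj
    · obtain ⟨i, rfl⟩ : ∃ i, j = i+3 := ⟨j-3, by omega⟩
      rfl
    · obtain ⟨i, rfl⟩ : ∃ i, j = i+3 := ⟨j-3, by omega⟩
      rfl
  | succ m ih =>
    obtain ⟨ih1, ih2⟩ := ih
    constructor <;> intro j hj
    · obtain ⟨i, rfl⟩ : ∃ i, j = i+1 := ⟨j-1, by omega⟩
      rw [PR1_succ, ih1 i (by omega), ih2 (i+1) (by omega), mul_zero, zero_add]
    · obtain ⟨i, rfl⟩ : ∃ i, j = i+1 := ⟨j-1, by omega⟩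
      rw [PR2_succ, ih1 i (by omega), ih2 (i+1) (by omega), ih2 i (by omega), mul_zero, mul_zero]
      ring

noncomputable def Sp (N M : ℕ) : Polynomial ℤ := ∑ j ∈ range N, C ((M.choose j : ℤ)) * X^j

lemma Sp_succ_succ (N M : ℕ) : Sp (N+1) (M+1) = Sp (N+1) M + X * Sp N M := by
  unfold Sp
  rw [Finset.sum_range_succ' (fun j => C (((M+1).choose j : ℤ)) * X^j) N,
      Finset.sum_range_succ' (fun j => C ((M.choose j : ℤ)) * X^j) N, Finset.mul_sum]
  have h5 : ∀ j ∈ range N, (C (((M+1).choose (j+1) : ℤ)) : Polynomial ℤ) * X^(j+1)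
      = C ((M.choose (j+1) : ℤ)) * X^(j+1) + X * (C ((M.choose j : ℤ)) * X^j) := by
    intro j hj
    rw [Nat.choose_succ_succ]
    push_cast
    rw [map_add]
    ring
  rw [Finset.sum_congr rfl h5, Finset.sum_add_distrib]
  simp only [Nat.choose_zero_right]
  ring

lemma Sp_top (m : ℕ) : Sp (m+2) (m+2) = Sp (m+1) (m+2) + C ((m:ℤ)+2) * X^(m+1) := by
  unfold Sp
  rw [Finset.sum_range_succ]
  congr 2
  rw [Nat.choose_succ_self_right]
  push_cast
  ring

lemma hC (a : ℤ) : (C a : Polynomial ℤ) = (a : Polynomial ℤ) := by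
  rw [← C_eq_intCast]; norm_num

lemma PR_explicit (m : ℕ) :
    (PR m).1 0 = 1 ∧ (PR m).2 0 = 1 ∧
    (PR m).1 1 = C (2*(m:ℤ)+2) * X + C (m:ℤ) ∧
    (PR m).2 1 = C (2*(m:ℤ)+3) * X + C ((m:ℤ)+1) ∧
    (PR m).1 m = C (((m:ℤ)+1)^2) * X^m + Sp m (m+2) ∧
    (PR m).2 (m+1) = C (2*(m:ℤ)+3) * X^(m+1) + Sp (m+1) (m+2) ∧
    (PR m).1 (m+1) = C 2 * X^(m+1) - C (m:ℤ) * X^m ∧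
    (PR m).2 (m+2) = -X^(m+1) ∧
    (PR m).1 (m+2) = X^m := by
  induction m with
  | zero =>
    refine ⟨rfl, rfl, ?_, ?_, ?_, ?_, ?_, ?_, ?_⟩
    · show (C 2 * X : Polynomial ℤ) = _
      simp [hC]
    · show (C 3 * X + 1 : Polynomial ℤ) = _
      norm_num [hC]
    · show (1 : Polynomial ℤ) = _
      simp [Sp, hC]
    · show (C 3 * X + 1 : Polynomial ℤ) = _
      simp [Sp, Finset.sum_range_succ, hC]
    · show (C 2 * X : Polynomial ℤ) = _
      simp [hC]
    · show (-X : Polynomial ℤ) = _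
      simp
    · show (1 : Polynomial ℤ) = _
      simp
  | succ m ih =>
    obtain ⟨p0, r0, p1, r1, pm, rm, pn, rn, pt⟩ := ih
    have z2 : (PR m).2 (m+3) = 0 := (PR_zero_of_big m).2 (m+3) (by omega)
    refine ⟨?_, ?_, ?_, ?_, ?_, ?_, ?_, ?_, ?_⟩
    · rw [PR1_zero]; exact r0
    · rw [PR2_zero]; exact r0
    · rw [PR1_succ, p0, r1]
      push_cast
      simp only [hC]
      push_cast
      ring
    · rw [PR2_succ, r0, p0, r1]
      push_cast
      simp only [hC]
      push_cast
      ring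
    · show (PR (m+1)).1 (m+1) = _
      rw [PR1_succ, pm, rm, show (m+1)+2 = (m+2)+1 from rfl, Sp_succ_succ m (m+2)]
      push_cast
      simp only [hC]
      push_cast
      ring
    · show (PR (m+1)).2 (m+2) = _
      rw [PR2_succ, rm, rn, pn, show (m+1)+2 = (m+2)+1 from rfl,
        Sp_succ_succ (m+1) (m+2), Sp_top m]
      push_cast
      simp only [hC]
      push_cast
      ring
    · show (PR (m+1)).1 (m+2) = _
      rw [PR1_succ, pn, rn]
      push_cast
      simp only [hC]
      push_cast
      ring
    · show (PR (m+1)).2 (m+3) = _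
      rw [PR2_succ, rn, z2, pt]
      ring
    · show (PR (m+1)).1 (m+3) = _
      rw [PR1_succ, pt, z2]
      ring

lemma PR_deg (m : ℕ) : (∀ k, ((PR m).1 k).natDegree ≤ k) ∧ (∀ k, ((PR m).2 k).natDegree ≤ k) := by
  induction m with
  | zero =>
    constructor <;> intro k
    · match k with
      | 0 => simp [show (PR 0).1 0 = 1 from rfl]
      | 1 =>
        show (C 2 * X : Polynomial ℤ).natDegree ≤ 1
        exact le_trans (natDegree_C_mul_le 2 X) natDegree_X_le
      | 2 => show (1 : Polynomial ℤ).natDegree ≤ 2; simp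
      | (j+3) => show (0 : Polynomial ℤ).natDegree ≤ j+3; simp
    · match k with
      | 0 => show (1 : Polynomial ℤ).natDegree ≤ 0; simp
      | 1 =>
        show (C 3 * X + 1 : Polynomial ℤ).natDegree ≤ 1
        refine le_trans (natDegree_add_le _ _) (max_le ?_ (by simp))
        exact le_trans (natDegree_C_mul_le 3 X) natDegree_X_le
      | 2 => show (-X : Polynomial ℤ).natDegree ≤ 2; simp [natDegree_neg]
      | (j+3) => show (0 : Polynomial ℤ).natDegree ≤ j+3; simp
  | succ m ih =>
    obtain ⟨ih1, ih2⟩ := ih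
    have hX1 : (X + 1 : Polynomial ℤ).natDegree ≤ 1 :=
      le_trans (natDegree_add_le _ _) (max_le natDegree_X_le (by simp))
    constructor <;> intro k
    · match k with
      | 0 => rw [PR1_zero]; exact ih2 0
      | (k+1) =>
        rw [PR1_succ]
        refine le_trans (natDegree_add_le _ _) (max_le ?_ (ih2 (k+1)))
        refine le_trans (natDegree_mul_le) ?_
        have := ih1 k
        simp only [natDegree_X]
        omega
    · match k with
      | 0 => rw [PR2_zero]; exact ih2 0
      | (k+1) =>
        rw [PR2_succ]
        refine le_trans (natDegree_add_le _ _) (max_le (le_trans (natDegree_add_le _ _) (max_le ?_ (ih2 (k+1)))) ?_)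
        · refine le_trans (natDegree_mul_le) ?_
          have := ih2 k
          omega
        · refine le_trans (natDegree_mul_le) ?_
          have := ih1 k
          simp only [natDegree_X]
          omega


lemma PR2_const (m : ℕ) : ∀ k, ((PR m).2 k).coeff 0 = ((m+1).choose k : ℤ) := by
  induction m with
  | zero =>
    intro k
    match k with
    | 0 => show (1 : Polynomial ℤ).coeff 0 = 1; simp
    | 1 => show (C 3 * X + 1 : Polynomial ℤ).coeff 0 = 1; simp
    | 2 => show (-X : Polynomial ℤ).coeff 0 = (Nat.choose 1 2 : ℤ); simp
    | (j+3) =>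
      show (0 : Polynomial ℤ).coeff 0 = (Nat.choose 1 (j+3) : ℤ)
      rw [Nat.choose_eq_zero_of_lt (by omega)]; simp
  | succ m ih =>
    intro k
    match k with
    | 0 => rw [PR2_zero, ih 0]; simp
    | (k+1) =>
      rw [PR2_succ, coeff_add, coeff_add, mul_coeff_zero, mul_coeff_zero, coeff_X_zero,
        zero_mul, add_zero, ih k, ih (k+1)]
      have : (X + 1 : Polynomial ℤ).coeff 0 = 1 := by simp
      rw [this, one_mul, Nat.choose_succ_succ (m+1) k]
      push_cast
      ring

lemma PR1_const (m : ℕ) : ∀ k, ((PR (m+1)).1 k).coeff 0 = ((m+1).choose k : ℤ) := by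
  intro k
  match k with
  | 0 => rw [PR1_zero, PR2_const m 0]
  | (k+1) =>
    rw [PR1_succ, coeff_add, mul_coeff_zero, coeff_X_zero, zero_mul, zero_add,
      PR2_const m (k+1)]

lemma arith2 (m j : ℕ) :
    (2*m+3-j).choose (j+3) + (2*m-j).choose j
      = (2*m+2-j).choose (j+2) + (2*m+1-j).choose (j+3)
        + (2*m-j).choose (j+2) + (2*m+1-j).choose (j+1) := by
  rcases Nat.lt_or_ge j (2*m) with h | h
  · obtain ⟨a, ha⟩ : ∃ a, 2*m = j + a + 1 := ⟨2*m - j - 1, by omega⟩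
    rw [show 2*m+3-j = a+4 by omega, show 2*m-j = a+1 by omega,
        show 2*m+2-j = a+3 by omega, show 2*m+1-j = a+2 by omega]
    have e1 : (a+4).choose (j+3) = (a+3).choose (j+2) + (a+3).choose (j+3) :=
      Nat.choose_succ_succ _ _
    have e2 : (a+3).choose (j+3) = (a+2).choose (j+2) + (a+2).choose (j+3) :=
      Nat.choose_succ_succ _ _
    have e3 : (a+2).choose (j+2) = (a+1).choose (j+1) + (a+1).choose (j+2) :=
      Nat.choose_succ_succ _ _
    have e4 : (a+2).choose (j+1) = (a+1).choose j + (a+1).choose (j+1) :=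
      Nat.choose_succ_succ _ _
    rw [e1, e2, e3, e4]
    ring
  · by_cases hm : m = 0 ∧ j = 0
    · obtain ⟨rfl, rfl⟩ := hm
      decide
    · have hm' : 1 ≤ m ∨ 1 ≤ j := by
        rcases Nat.eq_zero_or_pos m with rfl | h1
        · right; omega
        · left; omega
      rw [Nat.choose_eq_zero_of_lt (by omega), Nat.choose_eq_zero_of_lt (by omega),
          Nat.choose_eq_zero_of_lt (by omega), Nat.choose_eq_zero_of_lt (by omega),
          Nat.choose_eq_zero_of_lt (by omega), Nat.choose_eq_zero_of_lt (by omega)]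

lemma PR_lead (m : ℕ) :
    (∀ k, 1 ≤ k → ((PR m).1 k).coeff k = ((2*m+2-k).choose k : ℤ) + ((2*m+1-k).choose (k-1) : ℤ)) ∧
    (∀ k, 2 ≤ k → ((PR m).2 k).coeff k = ((2*m+4-k).choose k : ℤ) - ((2*m+2-k).choose (k-2) : ℤ)) := by
  induction m with
  | zero =>
    constructor
    · intro k hk
      match k, hk with
      | 1, _ =>
        show (C 2 * X : Polynomial ℤ).coeff 1 = _
        norm_num [coeff_C_mul]
      | 2, _ =>
        show (1 : Polynomial ℤ).coeff 2 = _
        norm_num [coeff_one]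
      | (j+3), _ =>
        show (0 : Polynomial ℤ).coeff (j+3) = _
        rw [show 2*0+2-(j+3) = 0 by omega, show 2*0+1-(j+3) = 0 by omega,
          Nat.choose_eq_zero_of_lt (by omega), Nat.choose_eq_zero_of_lt (by omega)]
        simp
    · intro k hk
      match k, hk with
      | 2, _ =>
        show (-X : Polynomial ℤ).coeff 2 = _
        norm_num [coeff_X]
      | 3, _ =>
        show (0 : Polynomial ℤ).coeff 3 = _
        norm_num [Nat.choose]
      | (j+4), _ =>
        show (0 : Polynomial ℤ).coeff (j+4) = _
        rw [show 2*0+4-(j+4) = 0 by omega, show 2*0+2-(j+4) = 0 by omega,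
          Nat.choose_eq_zero_of_lt (by omega), Nat.choose_eq_zero_of_lt (by omega)]
        simp
  | succ m ih =>
    obtain ⟨ihp, ihr⟩ := ih
    have hp0 : (PR m).1 0 = 1 := (PR_explicit m).1
    have hr1 : (PR m).2 1 = C (2*(m:ℤ)+3) * X + C ((m:ℤ)+1) := (PR_explicit m).2.2.2.1
    have hp1 : (PR m).1 1 = C (2*(m:ℤ)+2) * X + C (m:ℤ) := (PR_explicit m).2.2.1
    constructor
    · intro k hk
      match k, hk with
      | 1, _ =>
        rw [PR1_succ, coeff_add, coeff_X_mul, hp0, hr1]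
        rw [show 2*(m+1)+2-1 = 2*m+3 by omega, show 2*(m+1)+1-1 = 2*m+2 by omega,
          Nat.choose_one_right, Nat.choose_zero_right]
        norm_num [coeff_C_mul, coeff_one]
        ring
      | (j+2), _ =>
        rw [PR1_succ, coeff_add, coeff_X_mul, ihp (j+1) (by omega), ihr (j+2) (by omega)]
        rw [show 2*m+2-(j+1) = 2*m+1-j by omega, show 2*m+1-(j+1) = 2*m-j by omega,
            show (j+1)-1 = j by omega, show 2*m+4-(j+2) = 2*m+2-j by omega,
            show 2*m+2-(j+2) = 2*m-j by omega, show (j+2)-2 = j by omega,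
            show 2*(m+1)+2-(j+2) = 2*m+2-j by omega, show 2*(m+1)+1-(j+2) = 2*m+1-j by omega,
            show (j+2)-1 = j+1 by omega]
        ring
    · intro k hk
      match k, hk with
      | 2, _ =>
        rw [PR2_succ]
        have h1 : ((X+1) * (PR m).2 1 : Polynomial ℤ).coeff 2
            = ((PR m).2 1).coeff 1 + ((PR m).2 1).coeff 2 := by
          rw [add_mul, one_mul, coeff_add, coeff_X_mul]
        rw [coeff_add, coeff_add, h1, coeff_X_mul, ihr 2 (by omega), ihp 1 (by omega), hr1]
        have h2 : ((C (2*(m:ℤ)+3) * X + C ((m:ℤ)+1)) : Polynomial ℤ).coeff 1 = 2*(m:ℤ)+3 := by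
          simp [coeff_C_mul, coeff_C, coeff_X, coeff_one]
        have h3 : ((C (2*(m:ℤ)+3) * X + C ((m:ℤ)+1)) : Polynomial ℤ).coeff 2 = 0 := by
          simp [coeff_C_mul, coeff_C, coeff_X, coeff_one]
        rw [h2, h3]
        rw [show 2*m+4-2 = 2*m+2 by omega, show 2*m+2-2 = 2*m by omega,
          show 2*m+2-1 = 2*m+1 by omega, show 2*m+1-1 = 2*m by omega,
          show 2*(m+1)+4-2 = 2*m+4 by omega, show 2*(m+1)+2-2 = 2*m+2 by omega]
        have e1 : (2*m+4).choose 2 = (2*m+3) + ((2*m+2) + (2*m+2).choose 2) := by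
          rw [Nat.choose_succ_succ (2*m+3) 1, Nat.choose_succ_succ (2*m+2) 1,
            Nat.choose_one_right]
          norm_num [Nat.choose_one_right]
        rw [e1]
        push_cast [Nat.choose_one_right, Nat.choose_zero_right]
        ring
      | (j+3), _ =>
        rw [PR2_succ]
        have h1 : ((X+1) * (PR m).2 (j+2) : Polynomial ℤ).coeff (j+3)
            = ((PR m).2 (j+2)).coeff (j+2) + ((PR m).2 (j+2)).coeff (j+3) := by
          rw [add_mul, one_mul, coeff_add, coeff_X_mul]
        have h2 : ((PR m).2 (j+2)).coeff (j+3) = 0 :=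
          coeff_eq_zero_of_natDegree_lt (lt_of_le_of_lt ((PR_deg m).2 (j+2)) (by omega))
        rw [coeff_add, coeff_add, h1, h2, coeff_X_mul, ihr (j+2) (by omega),
          ihr (j+3) (by omega), ihp (j+2) (by omega)]
        rw [show 2*m+4-(j+2) = 2*m+2-j by omega, show 2*m+2-(j+2) = 2*m-j by omega,
          show (j+2)-2 = j by omega, show 2*m+4-(j+3) = 2*m+1-j by omega,
          show 2*m+2-(j+3) = 2*m-1-j by omega, show (j+3)-2 = j+1 by omega,
          show 2*m+1-(j+2) = 2*m-1-j by omega, show (j+2)-1 = j+1 by omega,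
          show 2*(m+1)+4-(j+3) = 2*m+3-j by omega, show 2*(m+1)+2-(j+3) = 2*m+1-j by omega]
        have h4 := arith2 m j
        push_cast at h4 ⊢
        linarith

lemma key (a b c d μ : ℂ) (h1 : a*d - b*c = 1) (h2 : a+b = c+d)
    (hμ : μ*(c+d)^2 = 1) : ∀ m : ℕ,
    μ * (a^(m+2)*b^m + c^m*d^(m+2)) =
      (∑ k ∈ range (m+3), (-μ)^(m+2-k) * aeval (b*c) ((PR m).1 k)) ∧
    μ * (a^(m+2)*b^(m+1) + c^(m+1)*d^(m+2)) =
      (c+d) * ∑ k ∈ range (m+4), (-μ)^(m+3-k) * aeval (b*c) ((PR m).2 k) := by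
  have hs : (c+d) ≠ 0 := fun h => by rw [h] at hμ; norm_num at hμ
  have hdb : d - b = μ * (c+d) := by
    have h3 : (c+d)*(d-b) = 1 := by linear_combination h1 - d*h2
    linear_combination μ*(c+d)*h3 - (d-b)*hμ
  have hab : a*b = b*c + μ*((c+d)*b) := by linear_combination b*h2 + b*hdb
  have hcd : c*d = b*c + μ*((c+d)*c) := by linear_combination c*hdb
  have h4 : μ*(c+d)*(b+c) = 1 - μ := by linear_combination μ*(c+d)*(-hdb) + (1-μ)*hμ
  have hab2 : a*b^2 = (b*c + 1 - μ)*b - μ*((c+d)*(b*c)) := by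
    linear_combination b*hab + b*h4
  have hdc2 : d*c^2 = (b*c + 1 - μ)*c - μ*((c+d)*(b*c)) := by
    linear_combination c*hcd + c*h4
  have hBeq : b = d - μ*(c+d) := by linear_combination -hdb
  have hAeq : a = c + d - b := by linear_combination h2
  intro m
  induction m with
  | zero =>
    constructor
    · show μ * (a^2*b^0 + c^0*d^2) = _
      rw [Finset.sum_range_succ, Finset.sum_range_succ, Finset.sum_range_succ,
        Finset.sum_range_zero]
      show _ = 0 + (-μ)^(2-0) * aeval (b*c) (1:Polynomial ℤ)
        + (-μ)^(2-1) * aeval (b*c) (C 2 * X) + (-μ)^(2-2) * aeval (b*c) (1:Polynomial ℤ)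
      simp only [map_one, map_mul, aeval_C, aeval_X, map_ofNat]
      norm_num
      subst hAeq; subst hBeq
      linear_combination (1+μ^2) * hμ
    · show μ * (a^2*b^1 + c^1*d^2) = _
      rw [Finset.sum_range_succ, Finset.sum_range_succ, Finset.sum_range_succ,
        Finset.sum_range_succ, Finset.sum_range_zero]
      show _ = (c+d) * (0 + (-μ)^(3-0) * aeval (b*c) (1:Polynomial ℤ)
        + (-μ)^(3-1) * aeval (b*c) (C 3 * X + 1) + (-μ)^(3-2) * aeval (b*c) (-X)
        + (-μ)^(3-3) * aeval (b*c) (0:Polynomial ℤ))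
      simp only [map_one, map_mul, map_add, map_neg, map_zero, aeval_C, aeval_X, map_ofNat]
      norm_num
      subst hAeq; subst hBeq
      linear_combination ((c+d)*μ^2 - (c+d)*μ^3) * hμ
  | succ m ih =>
    obtain ⟨ihP, ihR⟩ := ih
    set SP := ∑ k ∈ range (m+3), (-μ)^(m+2-k) * aeval (b*c) ((PR m).1 k) with hSP
    set SR := ∑ k ∈ range (m+4), (-μ)^(m+3-k) * aeval (b*c) ((PR m).2 k) with hSR
    have eP : (∑ k ∈ range (m+4), (-μ)^(m+3-k) * aeval (b*c) ((PR (m+1)).1 k))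
        = (b*c) * SP + SR := by
      rw [hSP, hSR,
        Finset.sum_range_succ' (fun k => (-μ)^(m+3-k) * aeval (b*c) ((PR (m+1)).1 k)) (m+3),
        Finset.sum_range_succ' (fun k => (-μ)^(m+3-k) * aeval (b*c) ((PR m).2 k)) (m+3)]
      have h5 : ∀ k ∈ range (m+3),
          (-μ)^(m+3-(k+1)) * aeval (b*c) ((PR (m+1)).1 (k+1))
          = (b*c) * ((-μ)^(m+2-k) * aeval (b*c) ((PR m).1 k))
            + (-μ)^(m+3-(k+1)) * aeval (b*c) ((PR m).2 (k+1)) := by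
        intro k hk
        rw [PR1_succ]
        have h6 : m+3-(k+1) = m+2-k := by omega
        rw [h6]
        simp only [map_add, map_mul, aeval_X]
        ring
      rw [Finset.sum_congr rfl h5, Finset.sum_add_distrib, ← Finset.mul_sum, PR1_zero]
      ring
    have eR : (∑ k ∈ range (m+5), (-μ)^(m+4-k) * aeval (b*c) ((PR (m+1)).2 k))
        = (b*c+1) * SR + (-μ) * SR + (-μ) * ((b*c) * SP) := by
      rw [hSP, hSR,
        Finset.sum_range_succ' (fun k => (-μ)^(m+4-k) * aeval (b*c) ((PR (m+1)).2 k)) (m+4)]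
      have h5 : ∀ k ∈ range (m+4),
          (-μ)^(m+4-(k+1)) * aeval (b*c) ((PR (m+1)).2 (k+1))
          = (b*c+1) * ((-μ)^(m+3-k) * aeval (b*c) ((PR m).2 k))
            + (-μ)^(m+4-(k+1)) * aeval (b*c) ((PR m).2 (k+1))
            + (b*c) * ((-μ)^(m+3-k) * aeval (b*c) ((PR m).1 k)) := by
        intro k hk
        rw [PR2_succ]
        have h6 : m+4-(k+1) = m+3-k := by omega
        rw [h6]
        simp only [map_add, map_mul, aeval_X, map_one]
        ring
      rw [Finset.sum_congr rfl h5, Finset.sum_add_distrib, Finset.sum_add_distrib,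
        ← Finset.mul_sum, ← Finset.mul_sum]
      -- middle sum: ∑_{k<m+4} ν^{m+4-(k+1)} aeval (R (k+1)) + ν^{m+4} aeval (R 0) = ν * SR
      have hmid : (∑ k ∈ range (m+4), (-μ)^(m+4-(k+1)) * aeval (b*c) ((PR m).2 (k+1)))
          + (-μ)^(m+4-0) * aeval (b*c) ((PR (m+1)).2 0)
          = (-μ) * SR := by
        rw [PR2_zero,
          ← Finset.sum_range_succ' (fun k => (-μ)^(m+4-k) * aeval (b*c) ((PR m).2 k)) (m+4),
          Finset.sum_range_succ]
        rw [(PR_zero_of_big m).2 (m+4) (by omega), map_zero, mul_zero, add_zero, hSR,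
          Finset.mul_sum]
        apply Finset.sum_congr rfl
        intro k hk
        have hk' : k < m+4 := Finset.mem_range.mp hk
        have h7 : m+4-k = (m+3-k)+1 := by omega
        rw [h7, pow_succ]
        ring
      -- last sum: (b*c) * ∑_{k<m+4} ν^{m+3-k} aeval(P k) = (b*c) * ((-μ) * SP)... 
      have hlast : (∑ k ∈ range (m+4), (-μ)^(m+3-k) * aeval (b*c) ((PR m).1 k))
          = (-μ) * SP := by
        rw [Finset.sum_range_succ, (PR_zero_of_big m).1 (m+3) (by omega), map_zero,
          mul_zero, add_zero, hSP, Finset.mul_sum]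
        apply Finset.sum_congr rfl
        intro k hk
        have hk' : k < m+3 := Finset.mem_range.mp hk
        have h7 : m+3-k = (m+2-k)+1 := by omega
        rw [h7, pow_succ]
        ring
      linear_combination hmid + (b*c)*hlast
    have hSRval : SR = μ*(c+d)*(μ * (a^(m+2)*b^(m+1) + c^(m+1)*d^(m+2))) := by
      apply mul_left_cancel₀ hs
      rw [← ihR]
      linear_combination (-(μ*(a^(m+2)*b^(m+1)+c^(m+1)*d^(m+2))))*hμ
    constructor
    · show μ * (a^(m+3)*b^(m+1) + c^(m+1)*d^(m+3)) = _
      rw [eP, hSRval, ← ihP]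
      linear_combination (μ*(a^(m+2)*b^m))*hab + (μ*(c^m*d^(m+2)))*hcd
    · show μ * (a^(m+3)*b^(m+2) + c^(m+2)*d^(m+3)) = _
      rw [eR, hSRval, ← ihP]
      linear_combination (μ*(a^(m+2)*b^m))*hab2 + (μ*(c^m*d^(m+2)))*hdc2
        - ((b*c+1-μ)*μ*(a^(m+2)*b^(m+1)+c^(m+1)*d^(m+2)))*hμ



/-- Lemma 2.4: the polynomials `P₀, …, P_{n+1}` of Theorem 2.3 can be chosen
with the explicit values `P₀ = 1`, `P₁ = 2nX + (n-1)`,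
`P_{n-1} = n² X^{n-1} + Σ_{j=0}^{n-2} C(n+1,j) X^j`,
`P_n = 2X^n + (1-n) X^{n-1}`, `P_{n+1} = X^{n-1}`, constant terms
`P_k(0) = C(n-1,k)`, leading coefficients
`[X^k] P_k = C(2n-k,k) + C(2n-k-1,k-1)` for `1 ≤ k ≤ n`, so that `P_k` has
degree exactly `k` for `k ≤ n` while `P_{n+1}` has degree `n-1`. -/
theorem stmt10 (n : ℕ) (hn : 2 ≤ n) :
    ∃ P : ℕ → Polynomial ℤ,
      (∀ k ≤ n + 1, (P k).natDegree ≤ k) ∧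
      (∀ a b c d : ℂ, a * d - b * c = 1 → a + b = c + d → c + d ≠ 0 →
        (1 / (c + d) ^ 2) *
            (a ^ (n + 1) * b ^ (n - 1) + c ^ (n - 1) * d ^ (n + 1)) =
          ∑ k ∈ Finset.range (n + 2),
            (-(1 / (c + d) ^ 2)) ^ (n + 1 - k) * Polynomial.aeval (b * c) (P k)) ∧
      (P 0 = 1) ∧
      (P 1 = Polynomial.C (2 * (n : ℤ)) * Polynomial.X + Polynomial.C ((n : ℤ) - 1)) ∧
      (P (n - 1) = Polynomial.C ((n : ℤ) ^ 2) * Polynomial.X ^ (n - 1) +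
        ∑ j ∈ Finset.range (n - 1),
          Polynomial.C (((n + 1).choose j : ℤ)) * Polynomial.X ^ j) ∧
      (P n = Polynomial.C 2 * Polynomial.X ^ n +
        Polynomial.C (1 - (n : ℤ)) * Polynomial.X ^ (n - 1)) ∧
      (P (n + 1) = Polynomial.X ^ (n - 1)) ∧
      (∀ k ≤ n + 1, (P k).coeff 0 = ((n - 1).choose k : ℤ)) ∧
      (∀ k, 1 ≤ k → k ≤ n →
        (P k).coeff k = ((2 * n - k).choose k : ℤ) + ((2 * n - k - 1).choose (k - 1) : ℤ)) ∧
      (∀ k ≤ n, (P k).natDegree = k) ∧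
      ((P (n + 1)).natDegree = n - 1) := by
  obtain ⟨m, rfl⟩ : ∃ m, n = m + 1 := ⟨n-1, by omega⟩
  have hm : 1 ≤ m := by omega
  refine ⟨(PR m).1, ?_, ?_, ?_, ?_, ?_, ?_, ?_, ?_, ?_, ?_, ?_⟩
  · intro k _
    exact (PR_deg m).1 k
  · intro a b c d h1 h2 hs
    have hμ : (1/(c+d)^2) * (c+d)^2 = 1 := by field_simp
    have hk := (key a b c d (1/(c+d)^2) h1 h2 hμ m).1
    simpa only [show m+1-1 = m from rfl, show m+1+1 = m+2 from rfl,
      show m+1+2 = m+3 from rfl] using hk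
  · exact (PR_explicit m).1
  · rw [(PR_explicit m).2.2.1]
    simp only [hC]
    push_cast
    ring
  · simp only [show m+1-1 = m from rfl, show m+1+1 = m+2 from rfl]
    rw [(PR_explicit m).2.2.2.2.1]
    unfold Sp
    simp only [hC]
    push_cast
    ring
  · rw [(PR_explicit m).2.2.2.2.2.2.1]
    simp only [show m+1-1 = m from rfl, hC]
    push_cast
    ring
  · simpa only [show m+1-1 = m from rfl] using (PR_explicit m).2.2.2.2.2.2.2.2
  · intro k _
    obtain ⟨i, rfl⟩ : ∃ i, m = i + 1 := ⟨m-1, by omega⟩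
    simpa only [show i+1+1-1 = i+1 from rfl] using PR1_const i k
  · intro k hk1 hk2
    rw [(PR_lead m).1 k hk1, show 2*(m+1)-k-1 = 2*m+1-k by omega,
      show 2*(m+1)-k = 2*m+2-k by omega]
  · intro k hk
    match k with
    | 0 =>
      rw [(PR_explicit m).1]
      simp
    | (k+1) =>
      apply le_antisymm ((PR_deg m).1 (k+1))
      apply le_natDegree_of_ne_zero
      rw [(PR_lead m).1 (k+1) (by omega)]
      have hpos : 0 < (2*m+2-(k+1)).choose (k+1) := Nat.choose_pos (by omega)
      have h2 : (0:ℤ) < ((2*m+2-(k+1)).choose (k+1) : ℤ) + ((2*m+1-(k+1)).choose (k+1-1) : ℤ) := by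
        have := (Nat.zero_le ((2*m+1-(k+1)).choose (k+1-1)))
        exact_mod_cast add_pos_of_pos_of_nonneg (by exact_mod_cast hpos) (by positivity)
      exact h2.ne'
  · rw [(PR_explicit m).2.2.2.2.2.2.2.2]
    simp
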